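/- There exist constants c > 0 and C > 0, depending only on N and the potentials V_1, …, V_{N−1}, such that for every (p,q) ∈ ℝ^N × ℝ^N and every 1 ≤ j ≤ N−1 one has H(p,q) · ξ_j² + (L_F ξ_j)² ≥ c · p_{j+1}² − C · p_j². -/

import Mathlib

open Real Finset

noncomputable section

/-- Lie derivative of `g` along the vector field `F`. -/
def LieD {E : Type*} [NormedAddCommGroup E] [NormedSpace ℝ E]
    (F : E → E) (g : E → ℝ) (x : E) : ℝ :=
  fderiv ℝ g x (F x)

/-- Phase space of a chain of `N` rotators: `(p, q)`. -/
abbrev RotState (N : ℕ) : Type := (Fin N → ℝ) × (Fin N → ℝ)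

/-- Momentum with 0-based natural index, `0` out of range. -/
def pc {N : ℕ} (x : RotState N) (i : ℕ) : ℝ := if h : i < N then x.1 ⟨i, h⟩ else 0

/-- Position with 0-based natural index, `0` out of range. -/
def qc {N : ℕ} (x : RotState N) (i : ℕ) : ℝ := if h : i < N then x.2 ⟨i, h⟩ else 0

/-- `ξ_i = −V_i'(q_i − q_{i+1})` (0-based index `i`). -/
def xi (N : ℕ) (V : ℕ → ℝ → ℝ) (i : ℕ) (x : RotState N) : ℝ :=
  -(deriv (V i) (qc x i - qc x (i + 1)))

/-- The explicit formula `L_F ξ_i = −(p_i − p_{i+1}) V_i''(q_i − q_{i+1})`. -/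
def LFxi (N : ℕ) (V : ℕ → ℝ → ℝ) (i : ℕ) (x : RotState N) : ℝ :=
  -((pc x i - pc x (i + 1)) * deriv (deriv (V i)) (qc x i - qc x (i + 1)))

/-- Hamiltonian of the rotator chain. -/
def Ham (N : ℕ) (V : ℕ → ℝ → ℝ) (x : RotState N) : ℝ :=
  ∑ i : Fin N, (x.1 i) ^ 2 / 2 + ∑ i ∈ Finset.range (N - 1), V i (qc x i - qc x (i + 1))

/-- Vector field of the damped rotator chain. -/
def Frot (N : ℕ) (V : ℕ → ℝ → ℝ) (x : RotState N) : RotState N :=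
  (fun i => xi N V i x - (if (i : ℕ) = 0 then x.1 i else xi N V ((i : ℕ) - 1) x),
   fun i => x.1 i)

/-- The Lyapunov function `W`. -/
def Wrot (N : ℕ) (V : ℕ → ℝ → ℝ) (a : ℕ → ℝ) (x : RotState N) : ℝ :=
  a 0 * Ham N V x ^ (2 * N - 1) -
    ∑ i ∈ Finset.range (N - 1),
      (a (2 * i + 1) * Ham N V x ^ (2 * (N - 1) - (2 * i + 1)) * (pc x i * xi N V i x)
        + a (2 * i + 2) * Ham N V x ^ (2 * (N - 1) - (2 * i + 2)) * (xi N V i x * LFxi N V i x))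

/-- Standing assumptions on the interaction potentials. -/
structure RotAssumptions (N : ℕ) (V : ℕ → ℝ → ℝ) : Prop where
  smooth : ∀ i < N - 1, ContDiff ℝ 3 (V i)
  periodic : ∀ i < N - 1, Function.Periodic (V i) 1
  ge_one : ∀ i < N - 1, ∀ x : ℝ, 1 ≤ V i x
  nondeg : ∀ i < N - 1, ∀ x : ℝ, (deriv (V i) x) ^ 2 + (deriv (deriv (V i)) x) ^ 2 ≠ 0
  top : ∀ i, N - 1 ≤ i → V i = fun _ => 0


lemma periodic_deriv' (f : ℝ → ℝ) (h : Function.Periodic f 1) :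
    Function.Periodic (deriv f) 1 := by
  intro x
  have : (fun y => f (y + 1)) = f := funext fun y => h y
  calc deriv f (x + 1) = deriv (fun y => f (y + 1)) x := (deriv_comp_add_const f 1 x).symm
    _ = deriv f x := by rw [this]

lemma key_bounds (f g : ℝ → ℝ) (hf : Continuous f) (hg : Continuous g)
    (hfp : Function.Periodic f 1) (hgp : Function.Periodic g 1)
    (hne : ∀ x, f x ^ 2 + g x ^ 2 ≠ 0) :
    ∃ m > (0:ℝ), ∃ M > (0:ℝ), ∀ x, m ≤ f x ^ 2 + g x ^ 2 ∧ g x ^ 2 ≤ M := by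
  set h : ℝ → ℝ := fun x => f x ^ 2 + g x ^ 2 with hh
  have hch : Continuous h := by continuity
  have hph : Function.Periodic h 1 := fun x => by simp [hh, hfp x, hgp x]
  obtain ⟨x0, hx0, hmin⟩ := isCompact_Icc.exists_isMinOn (s := Set.Icc (0:ℝ) 1)
    ⟨0, by norm_num⟩ hch.continuousOn
  obtain ⟨x1, hx1, hmax⟩ := isCompact_Icc.exists_isMaxOn (s := Set.Icc (0:ℝ) 1)
    ⟨0, by norm_num⟩ (hg.pow 2).continuousOn
  have hm : 0 < h x0 := lt_of_le_of_ne (by positivity) (Ne.symm (hne x0))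
  refine ⟨h x0, hm, g x1 ^ 2 + 1, by positivity, fun x => ?_⟩
  obtain ⟨y, hy, hxy⟩ := hph.exists_mem_Ico₀ one_pos x
  obtain ⟨z, hz, hxz⟩ := (show Function.Periodic (fun x => g x ^ 2) 1 from
    fun x => by simp [hgp x]).exists_mem_Ico₀ one_pos x
  constructor
  · show h x0 ≤ h x
    rw [hxy]; exact hmin (Set.mem_Icc_of_Ico hy)
  · have : g x ^ 2 = g z ^ 2 := hxz
    rw [this]
    have := hmax (Set.mem_Icc_of_Ico hz)
    simp only [Set.mem_setOf_eq, Pi.pow_apply] at this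
    linarith

theorem stmt4 (N : ℕ) (hN : 2 ≤ N) (V : ℕ → ℝ → ℝ) (hV : RotAssumptions N V) :
    ∃ c > (0 : ℝ), ∃ C > (0 : ℝ), ∀ x : RotState N, ∀ i < N - 1,
      c * pc x (i + 1) ^ 2 - C * pc x i ^ 2
        ≤ Ham N V x * xi N V i x ^ 2 + LFxi N V i x ^ 2 := by
  have hex : ∀ i, ∃ m > (0:ℝ), ∃ M > (0:ℝ), i < N - 1 →
      ∀ y, m ≤ deriv (V i) y ^ 2 + deriv (deriv (V i)) y ^ 2 ∧ deriv (deriv (V i)) y ^ 2 ≤ M := by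
    intro i
    by_cases hi : i < N - 1
    · have hs := hV.smooth i hi
      have hcf : Continuous (deriv (V i)) := hs.continuous_deriv (by norm_num)
      have h2 : ContDiff ℝ 2 (deriv (V i)) := by
        have := (contDiff_succ_iff_deriv (n := 2)).mp (by exact_mod_cast hs)
        exact this.2.2
      have hcg : Continuous (deriv (deriv (V i))) := h2.continuous_deriv (by norm_num)
      have hpf := periodic_deriv' (V i) (hV.periodic i hi)
      have hpg := periodic_deriv' _ hpf
      obtain ⟨m, hm, M, hM, hb⟩ := key_bounds _ _ hcf hcg hpf hpg (hV.nondeg i hi)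
      exact ⟨m, hm, M, hM, fun _ => hb⟩
    · exact ⟨1, one_pos, 1, one_pos, fun h => absurd h hi⟩
  choose m hm M hM hb using hex
  have hne' : (Finset.range (N - 1)).Nonempty := ⟨0, by simp; omega⟩
  refine ⟨(Finset.range (N - 1)).inf' hne' m / 2, by
      have := Finset.lt_inf'_iff (H := hne') (f := m) (a := (0:ℝ))
      have h0 : (0:ℝ) < (Finset.range (N - 1)).inf' hne' m :=
        this.mpr fun i _ => hm i
      linarith,
    (Finset.range (N - 1)).sup' hne' M, by
      exact (Finset.lt_sup'_iff hne').mpr ⟨0, Finset.mem_range.mpr (by omega), hM 0⟩,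
    fun x i hi => ?_⟩
  have hiN : i + 1 < N := by omega
  set a := qc x i - qc x (i + 1) with ha
  set u := pc x i with hu
  set v := pc x (i + 1) with hv
  set A := deriv (V i) a with hA
  set B := deriv (deriv (V i)) a with hB
  have hxi : xi N V i x = -A := rfl
  have hLF : LFxi N V i x = -((u - v) * B) := rfl
  obtain ⟨hmab, hMab⟩ := hb i hi a
  have hcle : (Finset.range (N - 1)).inf' hne' m ≤ m i :=
    Finset.inf'_le m (Finset.mem_range.mpr hi)
  have hCge : M i ≤ (Finset.range (N - 1)).sup' hne' M :=
    Finset.le_sup' M (Finset.mem_range.mpr hi)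
  have hH : v ^ 2 / 2 ≤ Ham N V x := by
    have h1 : x.1 ⟨i + 1, hiN⟩ ^ 2 / 2 ≤ ∑ j : Fin N, x.1 j ^ 2 / 2 :=
      Finset.single_le_sum (f := fun j : Fin N => x.1 j ^ 2 / 2) (fun j _ => by positivity) (Finset.mem_univ _)
    have h2 : (0:ℝ) ≤ ∑ j ∈ Finset.range (N - 1), V j (qc x j - qc x (j + 1)) :=
      Finset.sum_nonneg fun j hj =>
        le_trans zero_le_one (hV.ge_one j (Finset.mem_range.mp hj) _)
    have hpc : v = x.1 ⟨i + 1, hiN⟩ := dif_pos hiN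
    rw [Ham, hpc]; linarith
  rw [hxi, hLF]
  have f1 : v ^ 2 / 2 * A ^ 2 ≤ Ham N V x * A ^ 2 :=
    mul_le_mul_of_nonneg_right hH (sq_nonneg A)
  have f2 : (v ^ 2 / 2 - u ^ 2) * B ^ 2 ≤ (u - v) ^ 2 * B ^ 2 :=
    mul_le_mul_of_nonneg_right (by nlinarith [sq_nonneg (2 * u - v)]) (sq_nonneg B)
  have f3 : v ^ 2 / 2 * m i ≤ v ^ 2 / 2 * (A ^ 2 + B ^ 2) :=
    mul_le_mul_of_nonneg_left hmab (by positivity)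
  have f4 : u ^ 2 * B ^ 2 ≤ u ^ 2 * M i :=
    mul_le_mul_of_nonneg_left hMab (sq_nonneg u)
  have f5 : u ^ 2 * M i ≤ u ^ 2 * ((Finset.range (N - 1)).sup' hne' M) :=
    mul_le_mul_of_nonneg_left hCge (sq_nonneg u)
  have f6 : (Finset.range (N - 1)).inf' hne' m / 2 * v ^ 2 ≤ m i / 2 * v ^ 2 :=
    mul_le_mul_of_nonneg_right (by linarith) (sq_nonneg v)
  nlinarith [sq_nonneg ((u - v) * B)]
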